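/- Let t ≥ 1 be a natural number and let a and b be lists of real numbers of equal length m, each sorted in nondecreasing order. Suppose the multiset difference of b minus a (the multiset of elements of b not matched, with multiplicity, by elements of a) has cardinality at most t. Then for all natural numbers i with (i+1)·t < m, a[i·t] ≤ b[(i+1)·t]. -/

import Mathlib

open Classical in
lemma aux_filter_upper (l : List ℝ) (hs : l.Pairwise (· ≤ ·)) (n : ℕ) (hn : n < l.length) :
    (l.filter (fun z => decide (z < l[n]))).length ≤ n := by
  have hsplit : l = l.take n ++ l.drop n := (List.take_append_drop n l).symm
  have hdrop : (l.drop n).filter (fun z => decide (z < l[n])) = [] := by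
    apply List.filter_eq_nil_iff.mpr
    intro z hz
    simp only [decide_eq_true_eq, not_lt]
    obtain ⟨j, hj, rfl⟩ := List.mem_iff_getElem.mp hz
    rw [List.getElem_drop]
    have := hs.rel_get_of_le (a := ⟨n, hn⟩)
      (b := ⟨n + j, by have := hj; simp [List.length_drop] at this; omega⟩) (by simp)
    simpa using this
  calc (l.filter (fun z => decide (z < l[n]))).length
      = ((l.take n ++ l.drop n).filter (fun z => decide (z < l[n]))).length := by
        rw [← hsplit]
    _ = ((l.take n).filter (fun z => decide (z < l[n]))).length := by
        rw [List.filter_append, hdrop, List.append_nil]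
    _ ≤ (l.take n).length := List.length_filter_le _ _
    _ ≤ n := by simp

lemma aux_filter_lower (l : List ℝ) (hs : l.Pairwise (· ≤ ·)) (k : ℕ) (hk : k < l.length)
    (x : ℝ) (hx : l[k] < x) :
    k + 1 ≤ (l.filter (fun z => decide (z < x))).length := by
  have hsplit : l = l.take (k + 1) ++ l.drop (k + 1) := (List.take_append_drop _ l).symm
  have htake : (l.take (k + 1)).filter (fun z => decide (z < x)) = l.take (k + 1) := by
    apply List.filter_eq_self.mpr
    intro z hz
    simp only [decide_eq_true_eq]
    obtain ⟨j, hj, rfl⟩ := List.mem_iff_getElem.mp hz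
    have hjl : j < l.length := by simp [List.length_take] at hj; omega
    have hjk : j ≤ k := by simp [List.length_take] at hj; omega
    rw [List.getElem_take]
    have := hs.rel_get_of_le (a := ⟨j, hjl⟩) (b := ⟨k, hk⟩) (by exact hjk)
    calc l[j] ≤ l[k] := this
      _ < x := hx
  calc k + 1 = (l.take (k + 1)).length := by simp; omega
    _ = ((l.take (k + 1)).filter (fun z => decide (z < x))).length := by rw [htake]
    _ ≤ ((l.take (k + 1)).filter (fun z => decide (z < x))).length
        + ((l.drop (k + 1)).filter (fun z => decide (z < x))).length := Nat.le_add_right _ _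
    _ = (l.filter (fun z => decide (z < x))).length := by
        conv_rhs => rw [hsplit]
        rw [List.filter_append, List.length_append]

theorem sorted_interleaving (t : ℕ) (ht : 1 ≤ t) (a b : List ℝ) (m : ℕ)
    (ha : a.length = m) (hb : b.length = m)
    (hsa : a.Pairwise (· ≤ ·)) (hsb : b.Pairwise (· ≤ ·))
    (hdiff : ((b : Multiset ℝ) - (a : Multiset ℝ)).card ≤ t) :
    ∀ i : ℕ, (i + 1) * t < m → a.getD (i * t) 0 ≤ b.getD ((i + 1) * t) 0 := by
  classical
  intro i him
  set n := i * t with hn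
  set k := (i + 1) * t with hk
  have hkn : k = n + t := by simp [hn, hk]; ring
  have hkm : k < m := him
  have hnm : n < m := by omega
  have hna : n < a.length := by omega
  have hkb : k < b.length := by omega
  rw [List.getD_eq_getElem a 0 hna, List.getD_eq_getElem b 0 hkb]
  by_contra hlt
  push_neg at hlt
  set x := a[n] with hx
  -- count in b
  have hbcount : k + 1 ≤ (b.filter (fun z => decide (z < x))).length :=
    aux_filter_lower b hsb k hkb x hlt
  have hacount : (a.filter (fun z => decide (z < x))).length ≤ n :=
    aux_filter_upper a hsa n hna
  -- multiset inequality
  have hble : (b : Multiset ℝ) ≤ ((b : Multiset ℝ) - (a : Multiset ℝ)) + (a : Multiset ℝ) :=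
    tsub_le_iff_right.mp le_rfl
  have hfil : ((b : Multiset ℝ).filter (fun z => z < x)).card
      ≤ ((((b : Multiset ℝ) - (a : Multiset ℝ)) + (a : Multiset ℝ)).filter (fun z => z < x)).card :=
    Multiset.card_le_card (Multiset.filter_le_filter _ hble)
  rw [Multiset.filter_add, Multiset.card_add] at hfil
  have h1 : ((b : Multiset ℝ).filter (fun z => z < x)).card
      = (b.filter (fun z => decide (z < x))).length := by
    simp [Multiset.filter_coe]
  have h2 : ((a : Multiset ℝ).filter (fun z => z < x)).card
      = (a.filter (fun z => decide (z < x))).length := by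
    simp [Multiset.filter_coe]
  have h3 : ((((b : Multiset ℝ) - (a : Multiset ℝ)).filter (fun z => z < x))).card
      ≤ ((b : Multiset ℝ) - (a : Multiset ℝ)).card :=
    Multiset.card_le_card (Multiset.filter_le _ _)
  omega
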